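/- Let M ∈ ℚ⟦X⟧ be the Motzkin generating function, the unique power series with M = 1 + X·M + X²·M², and let c ∈ ℚ⟦X⟧ be the Catalan generating function, the unique power series with c = 1 + X·c². Set u = X·(c ∘ (-X))·(1 + X)⁻¹, a power series with zero constant term. Then M ∘ u = 1 + X; equivalently, (M - 1) ∘ u = X, so that u = x·c(-x)/(1+x) is the compositional inverse of M(x) - 1, and the Riordan array inverse (M, M-1)⁻¹ equals (1/(1+x), x·c(-x)/(1+x)). -/

import Mathlib

/-- Composition `u ∘ f` of formal power series (substitution of `f` into `u`), valid
when `f` has zero constant term: the coefficient of `X^n` is `∑_{k ≤ n} u_k [X^n] f^k`. -/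
noncomputable def composePS (u f : PowerSeries ℚ) : PowerSeries ℚ :=
  PowerSeries.mk fun n =>
    ∑ k ∈ Finset.range (n + 1), PowerSeries.coeff k u * PowerSeries.coeff n (f ^ k)

open PowerSeries in
lemma coeff_pow_zero {f : PowerSeries ℚ} (hf : constantCoeff f = 0)
    {n k : ℕ} (h : n < k) : coeff n (f ^ k) = 0 := by
  have hd : (X : ℚ⟦X⟧) ^ k ∣ f ^ k := pow_dvd_pow_of_dvd (X_dvd_iff.mpr hf) k
  exact (X_pow_dvd_iff.mp hd) n h

open PowerSeries in
lemma coeff_eval₂ {f : PowerSeries ℚ} (hf : constantCoeff f = 0)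
    (P : Polynomial ℚ) (n : ℕ) :
    coeff n (P.eval₂ C f) =
      ∑ k ∈ Finset.range (n + 1), P.coeff k * coeff n (f ^ k) := by
  rw [Polynomial.eval₂_eq_sum_range' C (n := max (n + 1) (P.natDegree + 1))
    (lt_of_lt_of_le (Nat.lt_succ_self _) (le_max_right _ _)) f, map_sum]
  have hcongr : (∑ i ∈ Finset.range (max (n + 1) (P.natDegree + 1)),
      coeff n (C (P.coeff i) * f ^ i)) =
      ∑ i ∈ Finset.range (max (n + 1) (P.natDegree + 1)),
        P.coeff i * coeff n (f ^ i) :=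
    Finset.sum_congr rfl fun i _ => by rw [coeff_C_mul]
  rw [hcongr]
  refine (Finset.sum_subset (Finset.range_subset_range.mpr (le_max_left _ _)) ?_).symm
  intro i _ hi
  rw [coeff_pow_zero hf (by simpa using hi), mul_zero]

open PowerSeries in
lemma coeff_composePS {f : PowerSeries ℚ} (hf : constantCoeff f = 0)
    (u : PowerSeries ℚ) {m n : ℕ} (hmn : m ≤ n) :
    coeff m (composePS u f) = coeff m ((trunc (n + 1) u).eval₂ C f) := by
  rw [coeff_eval₂ hf, composePS, coeff_mk]
  refine Finset.sum_congr rfl fun k hk => ?_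
  rw [coeff_trunc, if_pos (lt_of_lt_of_le (Finset.mem_range.mp hk) (by omega))]

open PowerSeries in
lemma comp_mul {f : PowerSeries ℚ} (hf : constantCoeff f = 0) (u v : PowerSeries ℚ) :
    composePS (u * v) f = composePS u f * composePS v f := by
  ext n
  calc coeff n (composePS (u * v) f)
      = ∑ k ∈ Finset.range (n + 1), coeff k (u * v) * coeff n (f ^ k) := by
        rw [composePS, coeff_mk]
    _ = ∑ k ∈ Finset.range (n + 1),
          (trunc (n + 1) u * trunc (n + 1) v).coeff k * coeff n (f ^ k) := by
        refine Finset.sum_congr rfl fun k hk => ?_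
        have hk' := Finset.mem_range.mp hk
        rw [PowerSeries.coeff_mul, Polynomial.coeff_mul]
        refine congrArg (· * _) (Finset.sum_congr rfl fun p hp => ?_)
        have h1 := Finset.HasAntidiagonal.antidiagonal.fst_le hp
        have h2 := Finset.HasAntidiagonal.antidiagonal.snd_le hp
        rw [coeff_trunc, coeff_trunc, if_pos (by omega), if_pos (by omega)]
    _ = coeff n ((trunc (n + 1) u * trunc (n + 1) v).eval₂ C f) :=
        (coeff_eval₂ hf _ n).symm
    _ = coeff n ((trunc (n + 1) u).eval₂ C f * (trunc (n + 1) v).eval₂ C f) := by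
        rw [Polynomial.eval₂_mul]
    _ = coeff n (composePS u f * composePS v f) := by
        rw [PowerSeries.coeff_mul, PowerSeries.coeff_mul]
        refine Finset.sum_congr rfl fun p hp => ?_
        rw [coeff_composePS hf u (Finset.HasAntidiagonal.antidiagonal.fst_le hp),
          coeff_composePS hf v (Finset.HasAntidiagonal.antidiagonal.snd_le hp)]

open PowerSeries in
lemma comp_one (f : PowerSeries ℚ) : composePS 1 f = 1 := by
  ext n
  rw [composePS, coeff_mk, Finset.sum_eq_single 0]
  · simp
  · intro k _ hk; simp [coeff_one, hk]
  · simp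

open PowerSeries in
lemma comp_add (u v f : PowerSeries ℚ) :
    composePS (u + v) f = composePS u f + composePS v f := by
  ext n
  simp [composePS, coeff_mk, add_mul, Finset.sum_add_distrib]

open PowerSeries in
lemma comp_sub (u v f : PowerSeries ℚ) :
    composePS (u - v) f = composePS u f - composePS v f := by
  ext n
  simp [composePS, coeff_mk, sub_mul, Finset.sum_sub_distrib]

open PowerSeries in
lemma comp_X {f : PowerSeries ℚ} (hf : constantCoeff f = 0) :
    composePS X f = f := by
  ext n
  rw [composePS, coeff_mk]
  rcases n with _ | n
  · simpa [coeff_one] using hf.symm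
  · rw [Finset.sum_eq_single 1]
    · simp
    · intro k _ hk; simp [coeff_X, hk]
    · intro h; exact absurd (Finset.mem_range.mpr (by omega)) h

open PowerSeries in
lemma comp_pow {f : PowerSeries ℚ} (hf : constantCoeff f = 0) (u : PowerSeries ℚ) (k : ℕ) :
    composePS (u ^ k) f = composePS u f ^ k := by
  induction k with
  | zero => simpa using comp_one f
  | succ k ih => rw [pow_succ, pow_succ, comp_mul hf, ih]

open PowerSeries in
/-- Let `M` be the Motzkin series (`M = 1 + XM + X²M²`) and `c` the Catalan
series (`c = 1 + Xc²`). With `u = X·(c∘(-X))·(1+X)⁻¹`, one has `M ∘ u = 1 + X`, equivalently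
`(M-1) ∘ u = X`: `u = x·c(-x)/(1+x)` is the compositional inverse of `M(x) - 1`, so that
`(M, M-1)⁻¹ = (1/(1+x), x·c(-x)/(1+x))`. -/
theorem stmt_16 (M c : PowerSeries ℚ)
    (hM : M = 1 + PowerSeries.X * M + PowerSeries.X ^ 2 * M ^ 2)
    (hc : c = 1 + PowerSeries.X * c ^ 2) :
    composePS M (PowerSeries.X * composePS c (-PowerSeries.X) * (1 + PowerSeries.X)⁻¹)
        = 1 + PowerSeries.X ∧
    composePS (M - 1) (PowerSeries.X * composePS c (-PowerSeries.X) * (1 + PowerSeries.X)⁻¹)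
        = PowerSeries.X := by
  set D : ℚ⟦X⟧ := composePS c (-X) with hD'
  set u : ℚ⟦X⟧ := X * D * (1 + X)⁻¹ with hu
  have hnX : constantCoeff (-X : ℚ⟦X⟧) = 0 := by simp
  have hfu : constantCoeff u = 0 := by simp [hu]
  -- functional equation for D
  have hD : D = 1 - X * D ^ 2 := by
    conv_lhs => rw [hD', hc]
    rw [comp_add, comp_one, comp_mul hnX, comp_X hnX, comp_pow hnX, ← hD']
    ring
  -- (1+X) is invertible
  have hinv : (1 + X : ℚ⟦X⟧) * (1 + X)⁻¹ = 1 :=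
    PowerSeries.mul_inv_cancel _ (by simp)
  have huX : u * (1 + X) = X * D := by
    rw [hu, mul_assoc, mul_comm ((1+X:ℚ⟦X⟧)⁻¹), hinv, mul_one]
  have hkey : u * (1 + X) + u ^ 2 * (1 + X) ^ 2 = X := by
    have h2 : u ^ 2 * (1 + X) ^ 2 = (u * (1 + X)) ^ 2 := by ring
    rw [h2, huX]
    linear_combination X * hD
  set A : ℚ⟦X⟧ := composePS M u with hA'
  have hA : A = 1 + u * A + u ^ 2 * A ^ 2 := by
    conv_lhs => rw [hA', hM]
    rw [comp_add, comp_add, comp_one, comp_mul hfu, comp_X hfu, comp_mul hfu,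
      comp_pow hfu, comp_pow hfu, comp_X hfu, ← hA']
  have hB : (1 + X : ℚ⟦X⟧) = 1 + u * (1 + X) + u ^ 2 * (1 + X) ^ 2 := by
    linear_combination - hkey
  have hzero : (A - (1 + X)) * (1 - u - u ^ 2 * (A + (1 + X))) = 0 := by
    linear_combination hA - hB
  have hne : (1 - u - u ^ 2 * (A + (1 + X)) : ℚ⟦X⟧) ≠ 0 := by
    intro h
    have := congrArg (constantCoeff) h
    simp [hfu] at this
  have hAB : A = 1 + X := by
    rcases mul_eq_zero.mp hzero with h | h
    · exact sub_eq_zero.mp h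
    · exact absurd h hne
  refine ⟨hAB, ?_⟩
  rw [comp_sub, comp_one, ← hA', hAB]
  ring
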